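/- Let C be a class of colorings of hypergraphs with the refinement property (any refinement of a coloring in C is in C). For every hypergraph H with n vertices, the C-choice number satisfies ch_C(H) ≤ χ_C(H)·ln n + 1. -/

import Mathlib

lemma card_bad_filter {α : Type} [Fintype α] [DecidableEq α] {r : ℕ} (s : Finset α) (t : Fin r) :
    (Finset.univ.filter (fun g : α → Fin r => ∀ a ∈ s, g a ≠ t)).card
      = (r - 1) ^ s.card * r ^ (Fintype.card α - s.card) := by
  have h : (Finset.univ.filter (fun g : α → Fin r => ∀ a ∈ s, g a ≠ t))
      = Fintype.piFinset (fun a => if a ∈ s then Finset.univ.erase t else Finset.univ) := by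
    ext g
    simp only [Finset.mem_filter, Finset.mem_univ, true_and, Fintype.mem_piFinset]
    constructor
    · intro h a
      by_cases ha : a ∈ s <;> simp [ha, h a]
    · intro h a ha
      have := h a; simp [ha] at this; exact this
  rw [h, Fintype.card_piFinset]
  simp only [apply_ite Finset.card, Finset.card_erase_of_mem (Finset.mem_univ t),
    Finset.card_univ, Fintype.card_fin]
  rw [Finset.prod_ite, Finset.prod_const, Finset.prod_const]
  congr 1
  · congr 1; simp
  · congr 1
    have : Finset.univ.filter (fun a => ¬ a ∈ s) = sᶜ := by
      ext a; simp [Finset.mem_compl]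
    rw [this, Finset.card_compl]

lemma key_ineq {r n k : ℕ} (hr : 1 ≤ r) (hn : 1 ≤ n) (hk : (r : ℝ) * Real.log n < k) :
    (n : ℝ) * (((r : ℝ) - 1) / r) ^ k < 1 := by
  have hk1 : 1 ≤ k := by
    by_contra h
    push_neg at h
    interval_cases k
    simp only [Nat.cast_zero] at hk
    have : (0:ℝ) ≤ (r : ℝ) * Real.log n :=
      mul_nonneg (by positivity) (Real.log_nonneg (by exact_mod_cast hn))
    linarith
  rcases eq_or_lt_of_le hr with h1 | h2
  · rw [← h1]
    simp [zero_pow (by omega : k ≠ 0)]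
  · have hrR : (1:ℝ) < r := by exact_mod_cast h2
    have hrpos : (0:ℝ) < r := by linarith
    set x : ℝ := ((r : ℝ) - 1) / r with hxdef
    have hx0 : 0 < x := div_pos (by linarith) hrpos
    have hxm : x - 1 = -(1/r) := by
      rw [hxdef]
      field_simp
      ring
    have hlogx : Real.log x ≤ -(1 / r) := by
      have h3 := Real.log_le_sub_one_of_pos hx0
      linarith
    have hklogx : (k : ℝ) * Real.log x < -Real.log n := by
      have h4 : (k : ℝ) * Real.log x ≤ (k:ℝ) * (-(1/r)) :=
        mul_le_mul_of_nonneg_left hlogx (by positivity)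
      have h5 : (k:ℝ) * (-(1/r)) < -Real.log n := by
        rw [mul_neg, neg_lt_neg_iff, mul_one_div, lt_div_iff₀ hrpos, mul_comm]
        exact hk
      linarith
    have hxk : x ^ k < 1 / n := by
      have h6 : x ^ k = Real.exp ((k:ℝ) * Real.log x) := by
        rw [← Real.log_pow, Real.exp_log (pow_pos hx0 k)]
      have h7 : (1:ℝ)/n = Real.exp (-Real.log n) := by
        rw [Real.exp_neg, Real.exp_log (by exact_mod_cast hn : (0:ℝ) < n), one_div]
      rw [h6, h7]
      exact Real.exp_lt_exp.mpr hklogx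
    calc (n:ℝ) * x ^ k < (n:ℝ) * (1/n) :=
          mul_lt_mul_of_pos_left hxk (by exact_mod_cast hn)
      _ = 1 := by field_simp

theorem choice_le_chromatic_mul_log_refinement {V : Type} [Fintype V] [DecidableEq V]
    (P : (V → ℕ) → Prop)
    (href : ∀ C C' : V → ℕ, P C → (∀ x y : V, C x ≠ C y → C' x ≠ C' y) → P C')
    (C0 : V → ℕ) (hC0 : P C0) :
    ((sInf {k : ℕ | ∀ L : V → Finset ℕ, (∀ v, k ≤ (L v).card) →
        ∃ C : V → ℕ, (∀ v, C v ∈ L v) ∧ P C} : ℕ) : ℝ)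
      ≤ ((sInf {k : ℕ | ∃ C : V → ℕ, (∀ v, C v ∈ Finset.Icc 1 k) ∧ P C} : ℕ) : ℝ)
          * Real.log (Fintype.card V) + 1 := by
  classical
  by_cases hV : IsEmpty V
  · have h0 : (0:ℕ) ∈ {k : ℕ | ∀ L : V → Finset ℕ, (∀ v, k ≤ (L v).card) →
        ∃ C : V → ℕ, (∀ v, C v ∈ L v) ∧ P C} :=
      fun L _ => ⟨C0, fun v => (hV.false v).elim, hC0⟩
    rw [Nat.sInf_eq_zero.mpr (Or.inl h0)]
    haveI := hV
    have hcz : Fintype.card V = 0 := Fintype.card_eq_zero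
    rw [hcz]
    simp
  · have hne : Nonempty V := not_isEmpty_iff.mp hV
    obtain ⟨n, hn_def⟩ : ∃ n, n = Fintype.card V := ⟨_, rfl⟩
    rw [← hn_def]
    have hn : 1 ≤ n := hn_def ▸ Fintype.card_pos
    have hmem : n ∈ {k : ℕ | ∃ C : V → ℕ, (∀ v, C v ∈ Finset.Icc 1 k) ∧ P C} := by
      have e := Fintype.equivFin V
      refine ⟨fun v => (e v : ℕ) + 1, fun v => ?_, ?_⟩
      · simp only [Finset.mem_Icc]
        have h9 : (e v : ℕ) < n := by rw [hn_def]; exact (e v).isLt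
        clear * - h9
        omega
      · refine href C0 _ hC0 (fun x y hne0 hxy => hne0 ?_)
        have hxy2 : e x = e y := Fin.ext (by clear * - hxy; omega)
        rw [e.injective hxy2]
    obtain ⟨r, hrdef⟩ : ∃ r, r = sInf {k : ℕ | ∃ C : V → ℕ, (∀ v, C v ∈ Finset.Icc 1 k) ∧ P C} :=
      ⟨_, rfl⟩
    rw [← hrdef]
    obtain ⟨Cs, hCs, hPCs⟩ := Nat.sInf_mem (Set.nonempty_of_mem hmem)
    rw [← hrdef] at hCs
    have hr1 : 1 ≤ r := by
      have h9 := hCs (Classical.arbitrary V)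
      simp only [Finset.mem_Icc] at h9
      clear * - h9
      omega
    obtain ⟨k, hk_def⟩ : ∃ k, k = ⌊(r:ℝ) * Real.log n⌋₊ + 1 := ⟨_, rfl⟩
    have hlogn : (0:ℝ) ≤ (r:ℝ) * Real.log n :=
      mul_nonneg (by positivity) (Real.log_nonneg (by exact_mod_cast hn))
    have hkgt : (r:ℝ) * Real.log n < k := by
      have := Nat.lt_floor_add_one ((r:ℝ) * Real.log n)
      rw [hk_def]
      push_cast
      exact_mod_cast this
    have hkle : (k:ℝ) ≤ (r:ℝ) * Real.log n + 1 := by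
      have := Nat.floor_le hlogn
      rw [hk_def]
      push_cast
      linarith
    have hkmem : k ∈ {k : ℕ | ∀ L : V → Finset ℕ, (∀ v, k ≤ (L v).card) →
        ∃ C : V → ℕ, (∀ v, C v ∈ L v) ∧ P C} := by
      intro L hL
      set S := Finset.univ.biUnion L with hS
      have hLS : ∀ v, L v ⊆ S := fun v => Finset.subset_biUnion_of_mem L (Finset.mem_univ v)
      obtain ⟨N, hN_def⟩ : ∃ N, N = Fintype.card {x // x ∈ S} := ⟨_, rfl⟩
      have hclsb : ∀ v, Cs v - 1 < r := by
        intro v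
        have h9 := hCs v
        simp only [Finset.mem_Icc] at h9
        clear * - h9
        omega
      set cls : V → Fin r := fun v => ⟨Cs v - 1, hclsb v⟩ with hcls_def
      set sv : V → Finset {x // x ∈ S} :=
        fun v => Finset.univ.filter (fun c : {x // x ∈ S} => (c:ℕ) ∈ L v) with hsv_def
      have hsvcard : ∀ v, (sv v).card = (L v).card := by
        intro v
        refine Finset.card_bij (fun (c : {x // x ∈ S}) _ => (c : ℕ)) ?_ ?_ ?_
        · intro a ha
          exact (Finset.mem_filter.mp ha).2
        · intro a ha b hb hab
          exact Subtype.ext hab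
        · intro b hb
          exact ⟨⟨b, hLS v hb⟩, Finset.mem_filter.mpr ⟨Finset.mem_univ _, hb⟩, rfl⟩
      set Bad : V → Finset ({x // x ∈ S} → Fin r) :=
        fun v => Finset.univ.filter (fun g => ∀ a ∈ sv v, g a ≠ cls v) with hBad_def
      have hBadcard : ∀ v, (Bad v).card = (r - 1) ^ (L v).card * r ^ (N - (L v).card) := by
        intro v
        rw [hN_def]
        exact (card_bad_filter (sv v) (cls v)).trans (by rw [hsvcard v])
      have hsvle : ∀ v, (L v).card ≤ N := by
        intro v
        rw [hN_def, ← hsvcard v]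
        exact (Finset.card_le_card (Finset.subset_univ (sv v))).trans_eq (Finset.card_univ)
      -- real bound per vertex
      have hx0 : (0:ℝ) ≤ ((r:ℝ) - 1) / r := by
        apply div_nonneg _ (by positivity)
        have : (1:ℝ) ≤ r := by exact_mod_cast hr1
        linarith
      have hx1 : ((r:ℝ) - 1) / r ≤ 1 := by
        apply div_le_one_of_le₀ (by linarith) (by positivity)
      have hrpos : (0:ℝ) < r := by
        have : (1:ℝ) ≤ r := by exact_mod_cast hr1
        linarith
      have hbound : ∀ v, ((Bad v).card : ℝ) ≤ (((r:ℝ) - 1) / r) ^ k * (r:ℝ) ^ N := by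
        intro v
        rw [hBadcard v]
        obtain ⟨m, hm⟩ : ∃ m, m = (L v).card := ⟨_, rfl⟩
        rw [← hm]
        have hkm : k ≤ m := hm ▸ hL v
        have hmN : m ≤ N := hm ▸ hsvle v
        have hcast : (((r - 1) ^ m * r ^ (N - m) : ℕ) : ℝ)
            = ((r:ℝ) - 1) ^ m * (r:ℝ) ^ (N - m) := by
          push_cast [Nat.cast_sub hr1]
          ring
        rw [hcast]
        have hp : (r:ℝ) ^ N = (r:ℝ) ^ m * (r:ℝ) ^ (N - m) := by
          rw [← pow_add]
          congr 1
          clear * - hmN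
          omega
        have heq : ((r:ℝ) - 1) ^ m * (r:ℝ) ^ (N - m) = (((r:ℝ) - 1) / r) ^ m * (r:ℝ) ^ N := by
          rw [hp, div_pow]
          have hrm : (r:ℝ) ^ m ≠ 0 := by positivity
          field_simp
        rw [heq]
        apply mul_le_mul_of_nonneg_right _ (by positivity)
        exact pow_le_pow_of_le_one hx0 hx1 hkm
      have hex : ∃ g : {x // x ∈ S} → Fin r, ∀ v, g ∉ Bad v := by
        by_contra h
        push_neg at h
        have hcover : (Finset.univ : Finset ({x // x ∈ S} → Fin r))
            ⊆ Finset.univ.biUnion Bad := by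
          intro g _
          obtain ⟨v, hv⟩ := h g
          exact Finset.mem_biUnion.mpr ⟨v, Finset.mem_univ v, hv⟩
        have hcard := (Finset.card_le_card hcover).trans Finset.card_biUnion_le
        have hU : (Finset.univ : Finset ({x // x ∈ S} → Fin r)).card = r ^ N := by
          rw [hN_def, Finset.card_univ, Fintype.card_fun, Fintype.card_fin]
        rw [hU] at hcard
        have hcardR : ((r:ℝ)) ^ N ≤ ∑ v : V, ((Bad v).card : ℝ) := by
          have := (Nat.cast_le (α := ℝ)).mpr hcard
          push_cast at this ⊢
          exact this
        have hsum : ∑ v : V, ((Bad v).card : ℝ)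
            ≤ (n : ℝ) * ((((r:ℝ) - 1) / r) ^ k * (r:ℝ) ^ N) := by
          calc ∑ v : V, ((Bad v).card : ℝ)
              ≤ ∑ _v : V, (((r:ℝ) - 1) / r) ^ k * (r:ℝ) ^ N :=
                Finset.sum_le_sum (fun v _ => hbound v)
            _ = (n : ℝ) * ((((r:ℝ) - 1) / r) ^ k * (r:ℝ) ^ N) := by
                rw [Finset.sum_const, Finset.card_univ, nsmul_eq_mul, ← hn_def]
        have hlt : (n : ℝ) * ((((r:ℝ) - 1) / r) ^ k * (r:ℝ) ^ N) < (r:ℝ) ^ N := by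
          have h1 := key_ineq hr1 hn hkgt
          have h2 : (0:ℝ) < (r:ℝ) ^ N := by positivity
          calc (n : ℝ) * ((((r:ℝ) - 1) / r) ^ k * (r:ℝ) ^ N)
              = ((n : ℝ) * (((r:ℝ) - 1) / r) ^ k) * (r:ℝ) ^ N := by ring
            _ < 1 * (r:ℝ) ^ N := mul_lt_mul_of_pos_right h1 h2
            _ = (r:ℝ) ^ N := one_mul _
        linarith
      obtain ⟨g, hg⟩ := hex
      have hgood : ∀ v, ∃ c : {x // x ∈ S}, (c:ℕ) ∈ L v ∧ g c = cls v := by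
        intro v
        have hnall : ¬ (∀ a ∈ sv v, g a ≠ cls v) := fun hall =>
          hg v (Finset.mem_filter.mpr ⟨Finset.mem_univ g, hall⟩)
        push_neg at hnall
        obtain ⟨c, hc1, hc2⟩ := hnall
        exact ⟨c, (Finset.mem_filter.mp hc1).2, hc2⟩
      choose f hf1 hf2 using hgood
      refine ⟨fun v => (f v : ℕ), fun v => hf1 v, ?_⟩
      apply href Cs _ hPCs
      intro x y hxy hcxy
      apply hxy
      have hfxy : f x = f y := Subtype.ext hcxy
      have hclseq : cls x = cls y := by rw [← hf2 x, ← hf2 y, hfxy]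
      have hval : Cs x - 1 = Cs y - 1 := congrArg Fin.val hclseq
      have h1 := hCs x
      have h2 := hCs y
      simp only [Finset.mem_Icc] at h1 h2
      clear * - h1 h2 hval
      omega
    have hle := Nat.sInf_le hkmem
    calc ((sInf {k : ℕ | ∀ L : V → Finset ℕ, (∀ v, k ≤ (L v).card) →
            ∃ C : V → ℕ, (∀ v, C v ∈ L v) ∧ P C} : ℕ) : ℝ)
        ≤ (k : ℝ) := by exact_mod_cast hle
      _ ≤ (r:ℝ) * Real.log n + 1 := hkle
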